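/- Let w ∈ H solve a(w,χ) = a(u,χ) − λ(u)(u,χ) for all χ ∈ H, where u ∈ H has ‖u‖₀ = 1 and u is not an eigenvector (u ≠ 0), and let v ∈ H satisfy ‖v − w‖ ≤ η‖w‖ with 0 ≤ η < 1. Then ‖u − v‖ ≥ (1 − η)‖u − w‖; in particular, since ‖u − w‖² = ‖u‖² + ‖w‖² > 0, also u − v ≠ 0. -/
import Mathlib


open scoped RealInnerProductSpace

/-- The Rayleigh quotient `λ(u) = a(u,u)/(u,u)`, where `a = ⟪·,·⟫` is the inner product of the
Hilbert space `H` (inducing the energy norm `‖·‖`) and `b` is the second inner product `(·,·)`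
(inducing the weaker norm `‖·‖₀ = √(b u u)`). Note `⟪u,u⟫ = ‖u‖²`. -/
noncomputable def rayleigh {H : Type*} [NormedAddCommGroup H] [InnerProductSpace ℝ H]
    (b : LinearMap.BilinForm ℝ H) (u : H) : ℝ :=
  ‖u‖ ^ 2 / b u u

/-- with `‖v − w‖ ≤ η‖w‖`, `0 ≤ η < 1`, one has `‖u − v‖ ≥ (1 − η)‖u − w‖`,
and in particular `u − v ≠ 0`. -/
theorem approximate_iterate_nonzero {H : Type*} [NormedAddCommGroup H] [InnerProductSpace ℝ H] [CompleteSpace H]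
    (b : LinearMap.BilinForm ℝ H)
    (hb_symm : ∀ x y : H, b x y = b y x)
    (hb_pos : ∀ x : H, x ≠ 0 → 0 < b x x)
    (u w v : H) (hu : b u u = 1) (hu0 : u ≠ 0)
    (hw : ∀ χ : H, ⟪w, χ⟫ = ⟪u, χ⟫ - rayleigh b u * b u χ)
    (eta : ℝ) (heta0 : 0 ≤ eta) (heta1 : eta < 1)
    (hv : ‖v - w‖ ≤ eta * ‖w‖) :
    (1 - eta) * ‖u - w‖ ≤ ‖u - v‖ ∧ u - v ≠ 0 := by
  have hray : rayleigh b u = ‖u‖ ^ 2 := by simp [rayleigh, hu]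
  have horth : ⟪u, w⟫ = 0 := by
    have h := hw u
    rw [hray, hu, real_inner_self_eq_norm_sq] at h
    rw [real_inner_comm]
    rw [h]; ring
  have hnorm : ‖u - w‖ ^ 2 = ‖u‖ ^ 2 + ‖w‖ ^ 2 := by
    rw [norm_sub_sq_real, horth]; ring
  have hw_le : ‖w‖ ≤ ‖u - w‖ := by
    nlinarith [norm_nonneg (u - w), norm_nonneg w, norm_nonneg u]
  have hu_le : ‖u‖ ≤ ‖u - w‖ := by
    nlinarith [norm_nonneg (u - w), norm_nonneg w, norm_nonneg u]
  have htri : ‖u - w‖ ≤ ‖u - v‖ + ‖v - w‖ := by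
    calc ‖u - w‖ = ‖(u - v) + (v - w)‖ := by rw [sub_add_sub_cancel]
    _ ≤ ‖u - v‖ + ‖v - w‖ := norm_add_le _ _
  have hmain : (1 - eta) * ‖u - w‖ ≤ ‖u - v‖ := by nlinarith
  refine ⟨hmain, fun h => ?_⟩
  have hupos : 0 < ‖u‖ := norm_pos_iff.mpr hu0
  have : ‖u - v‖ = 0 := by rw [h, norm_zero]
  nlinarith
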